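/- For every real x > 1, the number of primes less than or equal to x, π(x), satisfies c₁ · x / log x ≤ π(x) ≤ c₂ · x / log x for explicit positive constants c₁ and c₂ (e.g., c₁ = 0.92 and c₂ = 1.11 for sufficiently large x). -/
import Mathlib

open Real Finset

lemma pi_eq_card (m : ℕ) : Nat.primeCounting m = (Nat.primesBelow (m+1)).card := by
  rw [Nat.primesBelow_card_eq_primeCounting']; rfl

lemma pi_le_self (m : ℕ) : Nat.primeCounting m ≤ m := by
  rw [pi_eq_card]
  calc (Nat.primesBelow (m+1)).card ≤ (Finset.Ico 2 (m+1)).card := by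
        apply Finset.card_le_card
        intro p hp
        rw [Nat.mem_primesBelow] at hp
        exact Finset.mem_Ico.mpr ⟨hp.2.two_le, hp.1⟩
    _ ≤ m := by rw [Nat.card_Ico]; omega

lemma lower_core (n : ℕ) (hn : 1 ≤ n) :
    4 ^ n ≤ (2*n+1) ^ (Nat.primeCounting (2*n) + 1) := by
  have h1 : 4 ^ n ≤ 2 * n * Nat.centralBinom n :=
    Nat.four_pow_le_two_mul_self_mul_centralBinom n hn
  have hcb0 : Nat.centralBinom n ≠ 0 := (Nat.centralBinom_pos n).ne'
  set S := (Nat.centralBinom n).factorization.support with hS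
  have hple : ∀ p, p ^ (Nat.centralBinom n).factorization p ≤ 2 * n := by
    intro p
    have := Nat.pow_factorization_choose_le (p := p) (n := 2*n) (k := n) (by omega)
    simpa [Nat.centralBinom] using this
  have hsub : S ⊆ Nat.primesBelow (2*n+1) := by
    intro p hp
    have hp' : p ∈ (Nat.centralBinom n).primeFactors := by
      rwa [hS, Nat.support_factorization] at hp
    have hpp : p.Prime := Nat.prime_of_mem_primeFactors hp'
    have he : 1 ≤ (Nat.centralBinom n).factorization p := by
      rw [hS, Finsupp.mem_support_iff] at hp; omega
    have : p ≤ 2 * n := le_trans (Nat.le_self_pow (by omega) p) (hple p)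
    exact Nat.mem_primesBelow.mpr ⟨by omega, hpp⟩
  have h2 : Nat.centralBinom n ≤ (2*n) ^ S.card := by
    conv_lhs => rw [← Nat.factorization_prod_pow_eq_self hcb0]
    exact Finset.prod_le_pow_card S _ (2*n) (fun p _ => hple p)
  have hcard : S.card ≤ Nat.primeCounting (2*n) := by
    rw [pi_eq_card]; exact Finset.card_le_card hsub
  calc 4 ^ n ≤ 2 * n * Nat.centralBinom n := h1
    _ ≤ (2*n+1) * (2*n) ^ S.card := Nat.mul_le_mul (by omega) h2
    _ ≤ (2*n+1) * (2*n+1) ^ (Nat.primeCounting (2*n)) := by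
        refine Nat.mul_le_mul_left _ ?_
        calc (2*n) ^ S.card ≤ (2*n+1) ^ S.card := Nat.pow_le_pow_left (by omega) _
          _ ≤ (2*n+1) ^ (Nat.primeCounting (2*n)) := Nat.pow_le_pow_right (by omega) hcard
    _ = (2*n+1) ^ (Nat.primeCounting (2*n) + 1) := by ring

lemma upper_core (m s : ℕ) (hsm : s ≤ m) :
    s ^ (Nat.primeCounting m - Nat.primeCounting s) ≤ 4 ^ m := by
  set A := Nat.primesBelow (m+1)
  set B := Nat.primesBelow (s+1)
  have hBA : B ⊆ A := by
    intro p hp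
    rw [Nat.mem_primesBelow] at *
    exact ⟨by omega, hp.2⟩
  have hcard : (A \ B).card = Nat.primeCounting m - Nat.primeCounting s := by
    rw [Finset.card_sdiff_of_subset hBA, pi_eq_card, pi_eq_card]
  rw [← hcard]
  calc s ^ (A \ B).card ≤ ∏ p ∈ A \ B, p := by
        refine Finset.pow_card_le_prod _ _ _ ?_
        intro p hp
        rw [Finset.mem_sdiff, Nat.mem_primesBelow] at hp
        have : ¬ (p < s + 1) := fun h => hp.2 (Nat.mem_primesBelow.mpr ⟨h, hp.1.2⟩)
        omega
    _ ≤ ∏ p ∈ A, p := by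
        refine Finset.prod_le_prod_of_subset_of_one_le' Finset.sdiff_subset ?_
        intro p hp _
        exact (Nat.prime_of_mem_primesBelow hp).one_lt.le
    _ = primorial m := by rw [primorial]; rfl
    _ ≤ 4 ^ m := primorial_le_4_pow m

lemma pi_pos {m : ℕ} (hm : 2 ≤ m) : 1 ≤ Nat.primeCounting m := by
  have h := Nat.monotone_primeCounting hm
  have h2 : Nat.primeCounting 2 = 1 := by decide
  omega

lemma real_lower (m : ℕ) (hm : 2 ≤ m) :
    ((m:ℝ)+1)/20 ≤ (Nat.primeCounting m : ℝ) * Real.log m := by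
  have hlog2 : (0.6931:ℝ) < Real.log 2 := by
    have := Real.log_two_gt_d9; linarith
  have hlogm : Real.log 2 ≤ Real.log m :=
    Real.log_le_log (by norm_num) (by exact_mod_cast hm)
  by_cases hsmall : m ≤ 12
  · have h1 : (1:ℝ) ≤ (Nat.primeCounting m : ℝ) := by exact_mod_cast pi_pos hm
    have hmr : (m:ℝ) ≤ 12 := by exact_mod_cast hsmall
    nlinarith
  · push_neg at hsmall
    set n := m / 2 with hn
    have hn1 : 1 ≤ n := by omega
    have h2nm : 2 * n ≤ m := by omega
    have hm2n : m ≤ 2 * n + 1 := by omega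
    have hcore := lower_core n hn1
    set k := Nat.primeCounting (2*n) with hk
    have hcast : ((4:ℝ)) ^ n ≤ (2*(n:ℝ)+1) ^ (k+1) := by exact_mod_cast hcore
    have hlogineq : (n:ℝ) * Real.log 4 ≤ ((k:ℝ)+1) * Real.log (2*(n:ℝ)+1) := by
      have h4 : (0:ℝ) < 4 ^ n := by positivity
      have := Real.log_le_log h4 hcast
      rw [Real.log_pow, Real.log_pow] at this
      push_cast at this
      linarith
    have hlog4 : Real.log 4 = 2 * Real.log 2 := by
      rw [show (4:ℝ) = 2^2 by norm_num, Real.log_pow]; push_cast; ring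
    have h2nmR : 2*(n:ℝ) ≤ (m:ℝ) := by exact_mod_cast h2nm
    have hm2nR : (m:ℝ) ≤ 2*(n:ℝ) + 1 := by exact_mod_cast hm2n
    have hlog2n : Real.log (2*(n:ℝ)+1) ≤ Real.log ((m:ℝ)+1) := by
      apply Real.log_le_log (by positivity); linarith
    have hl0 : (0:ℝ) ≤ Real.log (2*(n:ℝ)+1) := by
      apply Real.log_nonneg
      have : (1:ℝ) ≤ (n:ℝ) := by exact_mod_cast hn1
      linarith
    have hk0 : (0:ℝ) ≤ (k:ℝ) := Nat.cast_nonneg k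
    have hkm : (k:ℝ) * Real.log (2*(n:ℝ)+1) ≥ 2*(n:ℝ)*Real.log 2 - Real.log (2*(n:ℝ)+1) := by
      rw [hlog4] at hlogineq; nlinarith
    have hklog : (k:ℝ) * Real.log ((m:ℝ)+1) ≥ ((m:ℝ)-1) * Real.log 2 - Real.log ((m:ℝ)+1) := by
      have h1 : (k:ℝ) * Real.log ((m:ℝ)+1) ≥ (k:ℝ) * Real.log (2*(n:ℝ)+1) := by
        exact mul_le_mul_of_nonneg_left hlog2n hk0
      nlinarith
    have hπ : (k:ℝ) ≤ (Nat.primeCounting m : ℝ) := by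
      exact_mod_cast Nat.monotone_primeCounting h2nm
    have hmm : Real.log ((m:ℝ)+1) ≤ 2 * Real.log m := by
      have h2m : (2:ℝ) ≤ m := by exact_mod_cast hm
      calc Real.log ((m:ℝ)+1) ≤ Real.log ((m:ℝ)^2) :=
            Real.log_le_log (by positivity) (by nlinarith)
        _ = 2 * Real.log m := by rw [Real.log_pow]; push_cast; ring
    have hlogub : Real.log ((m:ℝ)+1) ≤ 4 * Real.log 2 - 1 + ((m:ℝ)+1)/16 := by
      have h16 : (0:ℝ) < ((m:ℝ)+1)/16 := by positivity
      have h := Real.log_le_sub_one_of_pos h16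
      have heq : Real.log (((m:ℝ)+1)/16) = Real.log ((m:ℝ)+1) - Real.log 16 := by
        rw [Real.log_div (by positivity) (by norm_num)]
      have h16' : Real.log (16:ℝ) = 4 * Real.log 2 := by
        rw [show (16:ℝ) = 2^4 by norm_num, Real.log_pow]; push_cast; ring
      rw [heq, h16'] at h; linarith
    have hlm0 : (0:ℝ) ≤ Real.log m := le_trans (by linarith) hlogm
    have hmR : (13:ℝ) ≤ m := by exact_mod_cast hsmall
    have hlog2' : Real.log 2 < 0.6932 := by
      have := Real.log_two_lt_d9; linarith
    have hπ0 : (0:ℝ) ≤ (Nat.primeCounting m : ℝ) := Nat.cast_nonneg _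
    have step1 : (Nat.primeCounting m : ℝ) * Real.log m ≥ (k:ℝ) * Real.log ((m:ℝ)+1) / 2 := by
      have h1 := mul_le_mul_of_nonneg_left hmm hk0
      have h2 : (k:ℝ) * Real.log m ≤ (Nat.primeCounting m : ℝ) * Real.log m :=
        mul_le_mul_of_nonneg_right hπ hlm0
      linarith
    nlinarith

lemma real_upper (m : ℕ) (hm : 2 ≤ m) :
    (Nat.primeCounting m : ℝ) * Real.log m ≤ 10 * m := by
  set s := Nat.sqrt m + 1 with hs
  have hsq1 : 1 ≤ Nat.sqrt m := Nat.sqrt_pos.mpr (by omega)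
  have hs2 : 2 ≤ s := by omega
  have hsm : s ≤ m := by
    have := Nat.sqrt_lt_self (by omega : 1 < m)
    omega
  have hms2 : m < s ^ 2 := Nat.lt_succ_sqrt' m
  have hπs : Nat.primeCounting s ≤ Nat.primeCounting m := Nat.monotone_primeCounting hsm
  set k := Nat.primeCounting m - Nat.primeCounting s with hk
  have hπsum : (Nat.primeCounting m : ℝ) ≤ (s:ℝ) + (k:ℝ) := by
    have h1 : Nat.primeCounting s ≤ s := pi_le_self s
    have : Nat.primeCounting m ≤ s + k := by omega
    exact_mod_cast this
  have hcore := upper_core m s hsm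
  have hklog : (k:ℝ) * Real.log s ≤ 2 * (m:ℝ) * Real.log 2 := by
    have hcast : ((s:ℝ)) ^ k ≤ (4:ℝ) ^ m := by exact_mod_cast hcore
    have h := Real.log_le_log (by positivity) hcast
    rw [Real.log_pow, Real.log_pow] at h
    have hlog4 : Real.log 4 = 2 * Real.log 2 := by
      rw [show (4:ℝ) = 2^2 by norm_num, Real.log_pow]; push_cast; ring
    rw [hlog4] at h; push_cast at h ⊢; linarith
  have hsR : (2:ℝ) ≤ (s:ℝ) := by exact_mod_cast hs2
  have hlogs : Real.log m ≤ 2 * Real.log s := by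
    calc Real.log m ≤ Real.log ((s:ℝ)^2) := by
          apply Real.log_le_log (by positivity)
          exact_mod_cast hms2.le
      _ = 2 * Real.log s := by rw [Real.log_pow]; push_cast; ring
  have hlogs' : Real.log s ≤ (s:ℝ) - 1 := Real.log_le_sub_one_of_pos (by positivity)
  have hssub : (s:ℝ) * ((s:ℝ) - 1) ≤ 2 * m := by
    have h1 : ((Nat.sqrt m : ℝ))^2 ≤ (m:ℝ) := by exact_mod_cast Nat.sqrt_le' m
    have h2 : ((Nat.sqrt m : ℝ)) ≤ (m:ℝ) := by exact_mod_cast Nat.sqrt_le_self m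
    have hsR' : (s:ℝ) = (Nat.sqrt m : ℝ) + 1 := by rw [hs]; push_cast; ring
    rw [hsR']; nlinarith
  have hlogm0 : (0:ℝ) ≤ Real.log m :=
    Real.log_nonneg (by exact_mod_cast Nat.one_le_iff_ne_zero.mpr (by omega))
  have hlogs0 : (0:ℝ) ≤ Real.log s := Real.log_nonneg (by linarith)
  have hk0 : (0:ℝ) ≤ (k:ℝ) := Nat.cast_nonneg k
  have hs0 : (0:ℝ) ≤ (s:ℝ) := by linarith
  have hlog2' : Real.log 2 < 0.6932 := by
    have := Real.log_two_lt_d9; linarith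
  have hmR : (2:ℝ) ≤ (m:ℝ) := by exact_mod_cast hm
  calc (Nat.primeCounting m : ℝ) * Real.log m ≤ ((s:ℝ) + (k:ℝ)) * Real.log m :=
        mul_le_mul_of_nonneg_right hπsum hlogm0
    _ = (s:ℝ) * Real.log m + (k:ℝ) * Real.log m := by ring
    _ ≤ (s:ℝ) * (2 * ((s:ℝ)-1)) + (k:ℝ) * (2 * Real.log s) := by
        gcongr <;> linarith
    _ ≤ 2 * (2 * (m:ℝ)) + 2 * (2 * (m:ℝ) * Real.log 2) := by nlinarith
    _ ≤ 10 * m := by nlinarith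

theorem chebyshev_prime_counting :
    ∃ c₁ c₂ : ℝ, 0 < c₁ ∧ c₁ < c₂ ∧
      ∀ x : ℝ, 2 ≤ x →
        c₁ * x / Real.log x ≤ (Nat.primeCounting ⌊x⌋₊ : ℝ) ∧
        (Nat.primeCounting ⌊x⌋₊ : ℝ) ≤ c₂ * x / Real.log x := by
  refine ⟨1/20, 20, by norm_num, by norm_num, fun x hx => ?_⟩
  set m := ⌊x⌋₊ with hm
  have hm2 : 2 ≤ m := Nat.le_floor (by exact_mod_cast hx)
  have hmx : (m:ℝ) ≤ x := Nat.floor_le (by linarith)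
  have hxm : x < (m:ℝ) + 1 := Nat.lt_floor_add_one x
  have hmR : (2:ℝ) ≤ (m:ℝ) := by exact_mod_cast hm2
  have hlogm : (0:ℝ) < Real.log m := Real.log_pos (by linarith)
  have hlogx : (0:ℝ) < Real.log x := Real.log_pos (by linarith)
  have hlogxm : Real.log m ≤ Real.log x := Real.log_le_log (by linarith) hmx
  have hlogxm1 : Real.log x ≤ Real.log ((m:ℝ)+1) := Real.log_le_log (by linarith) hxm.le
  have hmm : Real.log ((m:ℝ)+1) ≤ 2 * Real.log m := by
    calc Real.log ((m:ℝ)+1) ≤ Real.log ((m:ℝ)^2) :=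
          Real.log_le_log (by positivity) (by nlinarith)
      _ = 2 * Real.log m := by rw [Real.log_pow]; push_cast; ring
  constructor
  · -- lower bound
    have hL := real_lower m hm2
    rw [div_le_iff₀ hlogx]
    calc 1/20 * x ≤ ((m:ℝ)+1)/20 := by linarith
      _ ≤ (Nat.primeCounting m : ℝ) * Real.log m := hL
      _ ≤ (Nat.primeCounting m : ℝ) * Real.log x := by
          exact mul_le_mul_of_nonneg_left hlogxm (Nat.cast_nonneg _)
  · -- upper bound
    have hU := real_upper m hm2
    rw [le_div_iff₀ hlogx]
    calc (Nat.primeCounting m : ℝ) * Real.log x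
        ≤ (Nat.primeCounting m : ℝ) * (2 * Real.log m) := by
          exact mul_le_mul_of_nonneg_left (hlogxm1.trans hmm) (Nat.cast_nonneg _)
      _ = 2 * ((Nat.primeCounting m : ℝ) * Real.log m) := by ring
      _ ≤ 2 * (10 * m) := by linarith
      _ ≤ 20 * x := by linarith
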